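/- Let d ≥ 1 be an integer and p ≥ 2 a real number. Then for all a, b ∈ ℝ^d one has |a|^p − |b|^p − p·|b|^{p−2}·⟨b, a−b⟩ ≤ p(p−1)·|a−b|²·∫₀¹ (1−θ)·|b + θ(a−b)|^{p−2} dθ. -/

import Mathlib

open MeasureTheory RealInnerProductSpace
open Filter Topology


lemma aux_eps (p : ℝ) (hp : 2 ≤ p) (A B C ε : ℝ) (hC : 0 ≤ C) (hB : B^2 ≤ A*C)
    (hφ : ∀ θ : ℝ, 0 ≤ A + 2*B*θ + C*θ^2) (hε : 0 < ε) :
    (A + 2*B + C + ε)^(p/2) - (A+ε)^(p/2) - p*B*(A+ε)^(p/2-1) ≤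
      p*(p-1)*C * ∫ θ in (0:ℝ)..1, (1-θ)*(A + 2*B*θ + C*θ^2 + ε)^(p/2-1) := by
  set q : ℝ := p/2 with hqdef
  have hq1 : (1:ℝ) ≤ q := by rw [hqdef]; linarith
  set φ : ℝ → ℝ := fun θ => A + 2*B*θ + C*θ^2 + ε with hφdef
  set ψ : ℝ → ℝ := fun θ => B + C*θ with hψdef
  have hpos : ∀ θ, 0 < φ θ := fun θ => by
    have := hφ θ; simp only [hφdef]; linarith
  have hφd : ∀ θ, HasDerivAt φ (2 * ψ θ) θ := by
    intro θ
    have h1 : HasDerivAt (fun θ : ℝ => A + 2*B*θ + C*θ^2 + ε)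
        (2*B + C*(2*θ)) θ := by
      have := (((hasDerivAt_id θ).const_mul (2*B)).const_add A).add
        ((hasDerivAt_pow 2 θ).const_mul C)
      simpa using this.add_const ε
    convert h1 using 1
    simp only [hψdef]; ring
  have hψd : ∀ θ : ℝ, HasDerivAt ψ C θ := by
    intro θ
    have := ((hasDerivAt_id θ).const_mul C).const_add B
    simp only [mul_one] at this
    exact this
  -- first derivative of Fa
  set Fa : ℝ → ℝ := fun θ => φ θ ^ q with hFadef
  set G : ℝ → ℝ := fun θ => 2 * ψ θ * q * φ θ ^ (q-1) with hGdef
  have hFd : ∀ θ, HasDerivAt Fa (G θ) θ := fun θ =>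
    (hφd θ).rpow_const (Or.inl (hpos θ).ne')
  -- second derivative
  set G' : ℝ → ℝ := fun θ =>
    2 * C * q * φ θ ^ (q-1) + 2 * ψ θ * q * (2 * ψ θ * (q-1) * φ θ ^ (q-1-1)) with hG'def
  have hGd : ∀ θ, HasDerivAt G (G' θ) θ := by
    intro θ
    have h1 : HasDerivAt (fun θ => 2 * ψ θ * q) (2 * C * q) θ :=
      ((hψd θ).const_mul 2).mul_const q
    have h2 : HasDerivAt (fun θ => φ θ ^ (q-1)) (2 * ψ θ * (q-1) * φ θ ^ (q-1-1)) θ :=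
      (hφd θ).rpow_const (Or.inl (hpos θ).ne')
    have := h1.mul h2
    exact this
  -- bound on second derivative
  have key : ∀ θ, G' θ ≤ p*(p-1)*C * φ θ ^ (q-1) := by
    intro θ
    have hX : 0 < φ θ := hpos θ
    have hR : 0 ≤ φ θ ^ (q-1-1) := Real.rpow_nonneg hX.le _
    have hsplit : φ θ ^ (q-1) = φ θ ^ (q-1-1) * φ θ := by
      rw [← Real.rpow_add_one hX.ne']; norm_num
    have hψ2 : ψ θ ^ 2 ≤ φ θ * C := by
      simp only [hψdef, hφdef]
      nlinarith [mul_nonneg hε.le hC]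
    have hM := mul_le_mul_of_nonneg_right hψ2 hR
    simp only [hG'def]
    rw [hsplit]
    have hp2q : p = 2*q := by rw [hqdef]; ring
    rw [hp2q]
    nlinarith [mul_le_mul_of_nonneg_left hM (by nlinarith : (0:ℝ) ≤ 4*q*(q-1))]
  -- continuity facts
  have hφc : Continuous φ := by simp only [hφdef]; continuity
  have hψc : Continuous ψ := by simp only [hψdef]; continuity
  have hWc : Continuous (fun θ => φ θ ^ (q-1)) :=
    hφc.rpow_const (fun θ => Or.inl (hpos θ).ne')
  have hRc : Continuous (fun θ => φ θ ^ (q-1-1)) :=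
    hφc.rpow_const (fun θ => Or.inl (hpos θ).ne')
  have hG'c : Continuous G' := by
    simp only [hG'def]
    exact ((continuous_const.mul hWc)).add
      (((continuous_const.mul hψc).mul continuous_const).mul
        (((continuous_const.mul hψc).mul continuous_const).mul hRc))
  -- FTC
  set H : ℝ → ℝ := fun θ => Fa 1 - Fa θ - (1-θ) * G θ with hHdef
  have hHd : ∀ θ, HasDerivAt H (-((1-θ) * G' θ)) θ := by
    intro θ
    have h1 : HasDerivAt (fun θ : ℝ => 1 - θ) (-1) θ := by
      simpa using (hasDerivAt_id θ).const_sub 1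
    have := ((hFd θ).const_sub (Fa 1)).sub (h1.mul (hGd θ))
    rw [show -((1-θ) * G' θ) = -G θ - (-1 * G θ + (1 - θ) * G' θ) by ring]
    exact this
  have hInt : IntervalIntegrable (fun θ => -((1-θ) * G' θ)) volume 0 1 :=
    (((continuous_const.sub continuous_id).mul hG'c).neg).intervalIntegrable 0 1
  have hFTC : ∫ θ in (0:ℝ)..1, -((1-θ) * G' θ) = H 1 - H 0 :=
    intervalIntegral.integral_eq_sub_of_hasDerivAt (fun θ _ => hHd θ) hInt
  have hH1 : H 1 = 0 := by simp [hHdef]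
  have hH0 : H 0 = Fa 1 - Fa 0 - G 0 := by simp [hHdef]
  have hEq : Fa 1 - Fa 0 - G 0 = ∫ θ in (0:ℝ)..1, (1-θ) * G' θ := by
    rw [intervalIntegral.integral_neg] at hFTC
    rw [hH1, hH0] at hFTC
    linarith
  -- compare integrals
  have hIle : ∫ θ in (0:ℝ)..1, (1-θ) * G' θ ≤
      ∫ θ in (0:ℝ)..1, (1-θ) * (p*(p-1)*C * φ θ ^ (q-1)) := by
    apply intervalIntegral.integral_mono_on (by norm_num)
    · exact ((continuous_const.sub continuous_id).mul hG'c).intervalIntegrable 0 1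
    · exact ((continuous_const.sub continuous_id).mul
        (continuous_const.mul hWc)).intervalIntegrable 0 1
    · intro θ hθ
      have : 0 ≤ 1 - θ := by linarith [hθ.2]
      exact mul_le_mul_of_nonneg_left (key θ) this
  have hpull : ∫ θ in (0:ℝ)..1, (1-θ) * (p*(p-1)*C * φ θ ^ (q-1)) =
      p*(p-1)*C * ∫ θ in (0:ℝ)..1, (1-θ) * φ θ ^ (q-1) := by
    rw [← intervalIntegral.integral_const_mul]
    apply intervalIntegral.integral_congr
    intro θ _
    ring
  have hG0 : G 0 = p*B*(A+ε)^(q-1) := by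
    simp only [hGdef, hψdef, hφdef, hqdef]
    ring_nf
  have hFa1 : Fa 1 = (A + 2*B + C + ε)^q := by
    simp only [hFadef, hφdef]; norm_num
  have hFa0 : Fa 0 = (A+ε)^q := by
    simp only [hFadef, hφdef]; norm_num
  calc (A + 2*B + C + ε)^(p/2) - (A+ε)^(p/2) - p*B*(A+ε)^(p/2-1)
      = Fa 1 - Fa 0 - G 0 := by rw [hFa1, hFa0, hG0]
    _ = ∫ θ in (0:ℝ)..1, (1-θ) * G' θ := hEq
    _ ≤ _ := hIle.trans_eq hpull

open RealInnerProductSpace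

lemma tendsto_rpow_seq (c e : ℝ) (he : 0 ≤ e) :
    Tendsto (fun n : ℕ => (c + 1/((n:ℝ)+1))^e) atTop (𝓝 (c^e)) := by
  have h1 : Tendsto (fun n : ℕ => c + 1/((n:ℝ)+1)) atTop (𝓝 c) := by
    simpa using tendsto_const_nhds.add (tendsto_one_div_add_atTop_nhds_zero_nat (𝕜 := ℝ))
  exact ((Real.continuousAt_rpow_const c e (Or.inr he)).tendsto).comp h1

/-- Taylor-type remainder inequality for `x ↦ |x|^p` (Lemma `mvt` of the paper). -/
theorem stmt_0 (d : ℕ) (hd : 1 ≤ d) (p : ℝ) (hp : 2 ≤ p)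
    (a b : EuclideanSpace ℝ (Fin d)) :
    ‖a‖ ^ p - ‖b‖ ^ p - p * ‖b‖ ^ (p - 2) * ⟪b, a - b⟫ ≤
      p * (p - 1) * ‖a - b‖ ^ 2 *
        ∫ θ in (0:ℝ)..1, (1 - θ) * ‖b + θ • (a - b)‖ ^ (p - 2) := by
  set v := a - b with hv
  set A : ℝ := ‖b‖^2 with hA
  set B : ℝ := ⟪b, v⟫ with hB
  set C : ℝ := ‖v‖^2 with hCdef
  have hC : 0 ≤ C := by positivity
  have hBle : B^2 ≤ A*C := by
    have h := real_inner_mul_inner_self_le b v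
    rw [real_inner_self_eq_norm_sq, real_inner_self_eq_norm_sq] at h
    nlinarith [h]
  have hφx : ∀ θ : ℝ, A + 2*B*θ + C*θ^2 = ‖b + θ•v‖^2 := by
    intro θ
    have h2 : ‖θ•v‖^2 = θ^2*‖v‖^2 := by
      rw [norm_smul, mul_pow, Real.norm_eq_abs, sq_abs]
    rw [norm_add_sq_real, real_inner_smul_right, h2]
    ring
  have hφ : ∀ θ : ℝ, 0 ≤ A + 2*B*θ + C*θ^2 := fun θ => by rw [hφx θ]; positivity
  have hABC : A + 2*B + C = ‖a‖^2 := by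
    have h := hφx 1
    simp only [one_smul, hv, add_sub_cancel] at h
    linarith [h]
  -- the sequence of epsilons
  have hεpos : ∀ n : ℕ, (0:ℝ) < 1/((n:ℝ)+1) := fun n => by positivity
  have hεle : ∀ n : ℕ, 1/((n:ℝ)+1) ≤ 1 := fun n => by
    rw [div_le_one (by positivity)]; simp
  have hmain : ∀ n : ℕ,
      (A + 2*B + C + 1/((n:ℝ)+1))^(p/2) - (A+1/((n:ℝ)+1))^(p/2)
        - p*B*(A+1/((n:ℝ)+1))^(p/2-1) ≤
      p*(p-1)*C * ∫ θ in (0:ℝ)..1, (1-θ)*(A + 2*B*θ + C*θ^2 + 1/((n:ℝ)+1))^(p/2-1) :=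
    fun n => aux_eps p hp A B C _ hC hBle hφ (hεpos n)
  -- limits
  have he1 : (0:ℝ) ≤ p/2 := by linarith
  have he2 : (0:ℝ) ≤ p/2-1 := by linarith
  have hL : Tendsto (fun n : ℕ =>
      (A + 2*B + C + 1/((n:ℝ)+1))^(p/2) - (A+1/((n:ℝ)+1))^(p/2)
        - p*B*(A+1/((n:ℝ)+1))^(p/2-1)) atTop
      (𝓝 ((A+2*B+C)^(p/2) - A^(p/2) - p*B*A^(p/2-1))) :=
    ((tendsto_rpow_seq (A+2*B+C) (p/2) he1).sub (tendsto_rpow_seq A (p/2) he1)).sub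
      ((tendsto_rpow_seq A (p/2-1) he2).const_mul (p*B))
  have hcont : ∀ ε : ℝ, 0 ≤ ε → Continuous (fun θ : ℝ => (1-θ)*(A + 2*B*θ + C*θ^2 + ε)^(p/2-1)) := by
    intro ε hε'
    apply (continuous_const.sub continuous_id).mul
    apply Continuous.rpow_const (by fun_prop)
    intro θ
    exact Or.inr he2
  have hI : Tendsto (fun n : ℕ =>
      ∫ θ in (0:ℝ)..1, (1-θ)*(A + 2*B*θ + C*θ^2 + 1/((n:ℝ)+1))^(p/2-1)) atTop
      (𝓝 (∫ θ in (0:ℝ)..1, (1-θ)*(A + 2*B*θ + C*θ^2)^(p/2-1))) := by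
    apply intervalIntegral.tendsto_integral_filter_of_dominated_convergence
      (bound := fun θ => (A + 2*B*θ + C*θ^2 + 1)^(p/2-1))
    · filter_upwards with n
      exact ((hcont _ (hεpos n).le).aestronglyMeasurable)
    · filter_upwards with n
      filter_upwards with θ
      intro hθ
      have hθ' : θ ∈ Set.Ioc (0:ℝ) 1 := by
        simpa [Set.uIoc_of_le (by norm_num : (0:ℝ) ≤ 1)] using hθ
      rw [Real.norm_eq_abs, abs_mul]
      have h1 : |1-θ| ≤ 1 := abs_le.mpr ⟨by linarith [hθ'.2], by linarith [hθ'.1]⟩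
      have hbase : 0 ≤ A + 2*B*θ + C*θ^2 + 1/((n:ℝ)+1) := by
        have := hφ θ; linarith [hεpos n]
      have h2 : |(A + 2*B*θ + C*θ^2 + 1/((n:ℝ)+1))^(p/2-1)| ≤ (A + 2*B*θ + C*θ^2 + 1)^(p/2-1) := by
        rw [abs_of_nonneg (Real.rpow_nonneg hbase _)]
        exact Real.rpow_le_rpow hbase (by linarith [hεle n]) he2
      calc |1-θ| * |(A + 2*B*θ + C*θ^2 + 1/((n:ℝ)+1))^(p/2-1)|
          ≤ 1 * (A + 2*B*θ + C*θ^2 + 1)^(p/2-1) :=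
            mul_le_mul h1 h2 (abs_nonneg _) zero_le_one
        _ = _ := one_mul _
    · exact (((by fun_prop : Continuous fun θ:ℝ => A+2*B*θ+C*θ^2+1).rpow_const
        (fun θ => Or.inr he2))).intervalIntegrable (μ := volume) 0 1
    · filter_upwards with θ
      intro _
      exact (tendsto_rpow_seq (A + 2*B*θ + C*θ^2) (p/2-1) he2).const_mul (1-θ)
  have hR : Tendsto (fun n : ℕ =>
      p*(p-1)*C * ∫ θ in (0:ℝ)..1, (1-θ)*(A + 2*B*θ + C*θ^2 + 1/((n:ℝ)+1))^(p/2-1)) atTop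
      (𝓝 (p*(p-1)*C * ∫ θ in (0:ℝ)..1, (1-θ)*(A + 2*B*θ + C*θ^2)^(p/2-1))) :=
    hI.const_mul _
  have hlim := le_of_tendsto_of_tendsto' hL hR hmain
  -- convert to the statement
  have hnp : ∀ (x e : ℝ), 0 ≤ x → (x^2)^e = x^(2*e) := by
    intro x e hx
    rw [← Real.rpow_natCast x 2, ← Real.rpow_mul hx]
    norm_num
  have e1 : (A+2*B+C)^(p/2) = ‖a‖^p := by
    rw [hABC, hnp _ _ (norm_nonneg a), show 2*(p/2) = p by ring]
  have e2 : A^(p/2) = ‖b‖^p := by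
    rw [hA, hnp _ _ (norm_nonneg b), show 2*(p/2) = p by ring]
  have e3 : p*B*A^(p/2-1) = p * ‖b‖^(p-2) * B := by
    rw [hA, hnp _ _ (norm_nonneg b), show 2*(p/2-1) = p-2 by ring]
    ring
  have e4 : (∫ θ in (0:ℝ)..1, (1-θ)*(A + 2*B*θ + C*θ^2)^(p/2-1)) =
      ∫ θ in (0:ℝ)..1, (1-θ) * ‖b + θ•v‖^(p-2) := by
    apply intervalIntegral.integral_congr
    intro θ _
    dsimp only
    rw [hφx θ, hnp _ _ (norm_nonneg _), show 2*(p/2-1) = p-2 by ring]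
  rw [e1, e2, e3, e4] at hlim
  exact hlim
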